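/- Let 0 < Lint < Lext and 0 < b < Lext be real numbers, and set Φ(β) := Lext + b·cos β. Let F, G, H : ℝ → ℝ be twice continuously differentiable on an open set containing (Lint, Lext], with H > 0 and F(ℓ)·Φ(β)² + G(ℓ) > 0 on (Lint, Lext] × ℝ. Suppose G(Lext) = 0, F(Lext) = H(Lext) = 1, F'(Lext) = F''(Lext) = G'(Lext) = G''(Lext) = 0, and additionally H'(Lext) = H''(Lext) = 0. Then, with 𝓕(ℓ,β) := F(ℓ)·Φ(β)² + G(ℓ), there exists δ > 0 such that Z_1(ℓ,β) < 0 for all (ℓ,β) ∈ (Lext−δ, Lext) × (π−δ, π+δ); that is, the null energy condition is violated in an open set sufficiently close to ℓ = Lext and β = π. -/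

import Mathlib

open Real Filter Set
open Topology

/-- First partial derivative of `F` with respect to its first argument `ℓ`. -/
noncomputable def pdl (F : ℝ × ℝ → ℝ) (l β : ℝ) : ℝ := deriv (fun x => F (x, β)) l

/-- Second partial derivative of `F` with respect to its first argument `ℓ`. -/
noncomputable def pdll (F : ℝ × ℝ → ℝ) (l β : ℝ) : ℝ := deriv (fun x => pdl F x β) l

/-- First partial derivative of `F` with respect to its second argument `β`. -/
noncomputable def pdb (F : ℝ × ℝ → ℝ) (l β : ℝ) : ℝ := deriv (fun y => F (l, y)) β

/-- Second partial derivative of `F` with respect to its second argument `β`. -/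
noncomputable def pdbb (F : ℝ × ℝ → ℝ) (l β : ℝ) : ℝ := deriv (fun y => pdb F l y) β

/-- The scalar `Z_ϑ = G_{ab} (A_ϑ)^a (A_ϑ)^b` for the metric
`ds² = −H dτ² + dℓ² + F dα² + b² dβ²` and `A_ϑ = H^{−1/2} ∂_τ + ϑ b^{−1} ∂_β`. -/
noncomputable def Zscalar (b : ℝ) (H : ℝ → ℝ) (F : ℝ × ℝ → ℝ) (ϑ l β : ℝ) : ℝ :=
  (1 / (4 * b ^ 2)) * ((pdb F l β / F (l, β)) ^ 2 - 2 * pdbb F l β / F (l, β))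
  + ((1 - ϑ ^ 2) / 4) * ((pdl F l β / F (l, β)) ^ 2 - 2 * pdll F l β / F (l, β))
  + (ϑ ^ 2 / 4) * (2 * deriv (deriv H) l / H l - (deriv H l / H l) ^ 2
      + (deriv H l / H l) * (pdl F l β / F (l, β)))


lemma pdb_calc (Lext b : ℝ) (F G : ℝ → ℝ) (l β : ℝ) :
    pdb (fun p : ℝ × ℝ => F p.1 * (Lext + b * Real.cos p.2) ^ 2 + G p.1) l β
      = F l * (2 * ((Lext + b * Real.cos β) * (b * -Real.sin β))) := by
  unfold pdb
  have h5 : HasDerivAt (fun y => F l * (Lext + b * Real.cos y) ^ 2 + G l)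
      (F l * ((2:ℝ) * (Lext + b * Real.cos β) ^ (2-1) * (b * -Real.sin β))) β :=
    (((((Real.hasDerivAt_cos β).const_mul b).const_add Lext).pow 2).const_mul (F l)).add_const (G l)
  have h6 : HasDerivAt (fun y => F l * (Lext + b * Real.cos y) ^ 2 + G l)
      (F l * (2 * ((Lext + b * Real.cos β) * (b * -Real.sin β)))) β := by
    convert h5 using 1; ring
  exact h6.deriv

lemma pdbb_calc (Lext b : ℝ) (F G : ℝ → ℝ) (l β : ℝ) :
    pdbb (fun p : ℝ × ℝ => F p.1 * (Lext + b * Real.cos p.2) ^ 2 + G p.1) l β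
      = F l * (2 * ((b * -Real.sin β) * (b * -Real.sin β)
          + (Lext + b * Real.cos β) * (b * -Real.cos β))) := by
  unfold pdbb
  have hfun : (fun y => pdb (fun p : ℝ × ℝ => F p.1 * (Lext + b * Real.cos p.2) ^ 2 + G p.1) l y)
      = fun y => F l * (2 * ((Lext + b * Real.cos y) * (b * -Real.sin y))) := by
    funext y; exact pdb_calc Lext b F G l y
  rw [hfun]
  have hf : HasDerivAt (fun y => Lext + b * Real.cos y) (b * -Real.sin β) β :=
    ((Real.hasDerivAt_cos β).const_mul b).const_add Lext
  have hg : HasDerivAt (fun y => b * -Real.sin y) (b * -Real.cos β) β :=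
    ((Real.hasDerivAt_sin β).neg).const_mul b
  exact (((hf.mul hg).const_mul 2).const_mul (F l)).deriv

lemma pdl_calc (Lext b : ℝ) (F G : ℝ → ℝ) (l β : ℝ)
    (hF : DifferentiableAt ℝ F l) (hG : DifferentiableAt ℝ G l) :
    pdl (fun p : ℝ × ℝ => F p.1 * (Lext + b * Real.cos p.2) ^ 2 + G p.1) l β
      = deriv F l * (Lext + b * Real.cos β) ^ 2 + deriv G l := by
  unfold pdl
  exact ((hF.hasDerivAt.mul_const ((Lext + b * Real.cos β) ^ 2)).add hG.hasDerivAt).deriv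

noncomputable def Qexpr (Lext b : ℝ) (F G H : ℝ → ℝ) (p : ℝ × ℝ) : ℝ :=
  (1 / (4 * b ^ 2)) *
      ((F p.1 * (2 * ((Lext + b * Real.cos p.2) * (b * -Real.sin p.2))) /
            (F p.1 * (Lext + b * Real.cos p.2) ^ 2 + G p.1)) ^ 2 -
        2 * (F p.1 * (2 * ((b * -Real.sin p.2) * (b * -Real.sin p.2) +
              (Lext + b * Real.cos p.2) * (b * -Real.cos p.2)))) /
          (F p.1 * (Lext + b * Real.cos p.2) ^ 2 + G p.1)) +
    ((1:ℝ) / 4) *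
      (2 * deriv (deriv H) p.1 / H p.1 - (deriv H p.1 / H p.1) ^ 2 +
        deriv H p.1 / H p.1 *
          ((deriv F p.1 * (Lext + b * Real.cos p.2) ^ 2 + deriv G p.1) /
            (F p.1 * (Lext + b * Real.cos p.2) ^ 2 + G p.1)))

lemma Z_eq_Q (Lext b : ℝ) (F G H : ℝ → ℝ) (l β : ℝ)
    (hF : DifferentiableAt ℝ F l) (hG : DifferentiableAt ℝ G l) :
    Zscalar b H (fun p : ℝ × ℝ => F p.1 * (Lext + b * Real.cos p.2) ^ 2 + G p.1) 1 l β
      = Qexpr Lext b F G H (l, β) := by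
  unfold Zscalar Qexpr
  rw [pdb_calc, pdbb_calc, pdl_calc Lext b F G l β hF hG]
  norm_num


/-- Part (ii) of the Corollary of the paper: for the product ansatz
`𝓕(ℓ,β) = F(ℓ)(Lext + b cos β)² + G(ℓ)`, if moreover `H'(Lext) = H''(Lext) = 0`, then `Z_1 < 0`
(violation of the null energy condition) in an open set close to `ℓ = Lext` and `β = π`. -/
theorem NEC_violated_near_external_boundary_product_ansatz
    (Lint Lext b : ℝ) (hLint : 0 < Lint) (hLL : Lint < Lext) (hb : 0 < b) (hbL : b < Lext)
    (F G H : ℝ → ℝ)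
    (U : Set ℝ) (hUopen : IsOpen U) (hUsub : Set.Ioc Lint Lext ⊆ U)
    (hF : ContDiffOn ℝ 2 F U) (hG : ContDiffOn ℝ 2 G U) (hH : ContDiffOn ℝ 2 H U)
    (hHpos : ∀ x ∈ U, 0 < H x)
    (hcalFpos : ∀ l ∈ Set.Ioc Lint Lext, ∀ β : ℝ,
      0 < F l * (Lext + b * Real.cos β) ^ 2 + G l)
    (hGext : G Lext = 0) (hFext : F Lext = 1) (hHext : H Lext = 1)
    (hF1 : deriv F Lext = 0) (hF2 : deriv (deriv F) Lext = 0)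
    (hG1 : deriv G Lext = 0) (hG2 : deriv (deriv G) Lext = 0)
    (hH1 : deriv H Lext = 0) (hH2 : deriv (deriv H) Lext = 0) :
    ∃ δ > 0, ∀ l β : ℝ, l ∈ Set.Ioo (Lext - δ) Lext → β ∈ Set.Ioo (Real.pi - δ) (Real.pi + δ) →
      Zscalar b H (fun p : ℝ × ℝ => F p.1 * (Lext + b * Real.cos p.2) ^ 2 + G p.1) 1 l β < 0 := by
  have hUL : Lext ∈ U := hUsub ⟨hLL, le_refl _⟩
  have hnU : U ∈ 𝓝 Lext := hUopen.mem_nhds hUL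
  -- continuity of the ingredients at Lext
  have hFc : ContinuousAt F Lext := (hF.continuousOn.continuousAt hnU)
  have hGc : ContinuousAt G Lext := (hG.continuousOn.continuousAt hnU)
  have hHc : ContinuousAt H Lext := (hH.continuousOn.continuousAt hnU)
  have hF' : ContDiffOn ℝ 1 (deriv F) U := hF.deriv_of_isOpen hUopen (by norm_num)
  have hG' : ContDiffOn ℝ 1 (deriv G) U := hG.deriv_of_isOpen hUopen (by norm_num)
  have hH' : ContDiffOn ℝ 1 (deriv H) U := hH.deriv_of_isOpen hUopen (by norm_num)
  have hH'' : ContDiffOn ℝ 0 (deriv (deriv H)) U := hH'.deriv_of_isOpen hUopen (by norm_num)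
  have hF'c : ContinuousAt (deriv F) Lext := hF'.continuousOn.continuousAt hnU
  have hG'c : ContinuousAt (deriv G) Lext := hG'.continuousOn.continuousAt hnU
  have hH'c : ContinuousAt (deriv H) Lext := hH'.continuousOn.continuousAt hnU
  have hH''c : ContinuousAt (deriv (deriv H)) Lext := hH''.continuousOn.continuousAt hnU
  set pt : ℝ × ℝ := (Lext, Real.pi) with hpt
  -- continuity of composed maps at pt
  have c1 : ContinuousAt (fun p : ℝ × ℝ => F p.1) pt := hFc.comp continuousAt_fst
  have c2 : ContinuousAt (fun p : ℝ × ℝ => G p.1) pt := hGc.comp continuousAt_fst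
  have c3 : ContinuousAt (fun p : ℝ × ℝ => H p.1) pt := hHc.comp continuousAt_fst
  have c4 : ContinuousAt (fun p : ℝ × ℝ => deriv F p.1) pt :=
    ContinuousAt.comp (g := deriv F) (f := Prod.fst) hF'c continuousAt_fst
  have c5 : ContinuousAt (fun p : ℝ × ℝ => deriv G p.1) pt :=
    ContinuousAt.comp (g := deriv G) (f := Prod.fst) hG'c continuousAt_fst
  have c6 : ContinuousAt (fun p : ℝ × ℝ => deriv H p.1) pt :=
    ContinuousAt.comp (g := deriv H) (f := Prod.fst) hH'c continuousAt_fst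
  have c7 : ContinuousAt (fun p : ℝ × ℝ => deriv (deriv H) p.1) pt :=
    ContinuousAt.comp (g := deriv (deriv H)) (f := Prod.fst) hH''c continuousAt_fst
  have ccos : ContinuousAt (fun p : ℝ × ℝ => Real.cos p.2) pt :=
    Real.continuous_cos.continuousAt.comp continuousAt_snd
  have csin : ContinuousAt (fun p : ℝ × ℝ => Real.sin p.2) pt :=
    Real.continuous_sin.continuousAt.comp continuousAt_snd
  have cΦ : ContinuousAt (fun p : ℝ × ℝ => Lext + b * Real.cos p.2) pt :=
    continuousAt_const.add (continuousAt_const.mul ccos)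
  have cF : ContinuousAt (fun p : ℝ × ℝ =>
      F p.1 * (Lext + b * Real.cos p.2) ^ 2 + G p.1) pt := (c1.mul (cΦ.pow 2)).add c2
  have hΦpt : Lext + b * Real.cos Real.pi = Lext - b := by rw [Real.cos_pi]; ring
  have hDne : F pt.1 * (Lext + b * Real.cos pt.2) ^ 2 + G pt.1 ≠ 0 := by
    have hLb : 0 < Lext - b := by linarith
    simp only [hpt, hFext, hGext, hΦpt, one_mul, add_zero]
    exact (pow_pos hLb 2).ne'
  have hHne : H pt.1 ≠ 0 := by simp [hpt, hHext]
  have hQc : ContinuousAt (Qexpr Lext b F G H) pt := by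
    unfold Qexpr
    refine ContinuousAt.add (continuousAt_const.mul (ContinuousAt.sub ?_ ?_))
      (continuousAt_const.mul (ContinuousAt.add (ContinuousAt.sub ?_ ?_) ?_))
    · exact ((c1.mul (continuousAt_const.mul (cΦ.mul (continuousAt_const.mul csin.neg)))).div
        cF hDne).pow 2
    · exact (continuousAt_const.mul (c1.mul (continuousAt_const.mul
        (((continuousAt_const.mul csin.neg).mul (continuousAt_const.mul csin.neg)).add
          (cΦ.mul (continuousAt_const.mul ccos.neg)))))).div cF hDne
    · exact (continuousAt_const.mul c7).div c3 hHne
    · exact (c6.div c3 hHne).pow 2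
    · exact (c6.div c3 hHne).mul (((c4.mul (cΦ.pow 2)).add c5).div cF hDne)
  have hQneg : Qexpr Lext b F G H pt < 0 := by
    have hLb : 0 < Lext - b := by linarith
    have hval : Qexpr Lext b F G H pt
        = -((Lext - b) * b / (b ^ 2 * (Lext - b) ^ 2)) := by
      simp [Qexpr, hpt, hFext, hGext, hHext, hF1, hG1, hH1, hH2, Real.cos_pi, Real.sin_pi, hΦpt]
      rw [show Lext + -b = Lext - b by ring]
      field_simp
      ring
    rw [hval]
    have : (0:ℝ) < (Lext - b) * b / (b ^ 2 * (Lext - b) ^ 2) :=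
      div_pos (mul_pos hLb hb) (mul_pos (pow_pos hb 2) (pow_pos hLb 2))
    linarith
  have h1 : ∀ᶠ p in 𝓝 pt, Qexpr Lext b F G H p < 0 :=
    hQc.eventually_lt continuousAt_const hQneg
  have h2 : ∀ᶠ p : ℝ × ℝ in 𝓝 pt, p.1 ∈ U :=
    continuousAt_fst.preimage_mem_nhds (by rwa [hpt])
  obtain ⟨ε, hε, hball⟩ := Metric.eventually_nhds_iff.mp (h1.and h2)
  refine ⟨ε, hε, fun l β hl hβ => ?_⟩
  have hd : dist (l, β) pt < ε := by
    rw [hpt, Prod.dist_eq]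
    simp only [Real.dist_eq]
    apply max_lt
    · rw [abs_lt]; constructor <;> [linarith [hl.1, hl.2]; linarith [hl.1, hl.2]]
    · rw [abs_lt]; constructor <;> [linarith [hβ.1, hβ.2]; linarith [hβ.1, hβ.2]]
  obtain ⟨hneg, hlU⟩ := hball hd
  have hFd : DifferentiableAt ℝ F l :=
    (hF.contDiffAt (hUopen.mem_nhds hlU)).differentiableAt (by norm_num)
  have hGd : DifferentiableAt ℝ G l :=
    (hG.contDiffAt (hUopen.mem_nhds hlU)).differentiableAt (by norm_num)
  rw [Z_eq_Q Lext b F G H l β hFd hGd]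
  exact hneg
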